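/- Suppose w is an antisymmetric edge-weight assignment on the vertex set V that is difference generated by Γ : V → ℝ (w(x,y) = Γ(x) − Γ(y)), and enumerate V as γ_1 ≤ γ_2 ≤ ... ≤ γ_m in nondecreasing order of Γ-values. Then for every k, there exists a monotone ordered k-partition of V (one respecting the Γ-order: lower Γ-values in weakly lower pieces) that achieves the maximum score among all ordered k-partitions. -/

import Mathlib

/-- The score of an ordered `k`-partition (level function `P`, higher level =
higher piece) of a weighted tournament with antisymmetric weights `w`:
`v_w(P) = ∑_{x ≻ y} w x y`, summing over ordered pairs with `x`'s piece
strictly above `y`'s piece. -/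
def opScore {V : Type*} [Fintype V] {k : ℕ} (w : V → V → ℝ) (P : V → Fin k) : ℝ :=
  ∑ x : V, ∑ y : V, if P y < P x then w x y else 0

/-- Auxiliary "balance" function: for a partition `R` and a level `i`, the
number of vertices strictly below level `i` minus the number strictly above. -/
noncomputable def balFun {V : Type*} [Fintype V] {k : ℕ} (R : V → Fin k) (i : Fin k) : ℝ :=
  ((Finset.univ.filter fun b => R b < i).card : ℝ)
    - ((Finset.univ.filter fun b => i < R b).card : ℝ)

lemma card_filter_comp_equiv {V : Type*} [Fintype V] (ψ : V ≃ V) (p : V → Prop)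
    [DecidablePred p] :
    (Finset.univ.filter fun b => p (ψ b)).card = (Finset.univ.filter p).card := by
  rw [← Fintype.card_subtype, ← Fintype.card_subtype]
  exact Fintype.card_congr (ψ.subtypeEquiv fun a => Iff.rfl)

lemma balFun_comp_equiv {V : Type*} [Fintype V] {k : ℕ} (R : V → Fin k) (ψ : V ≃ V) :
    balFun (fun v => R (ψ v)) = balFun R := by
  funext i
  unfold balFun
  rw [card_filter_comp_equiv ψ (fun b => R b < i), card_filter_comp_equiv ψ (fun b => i < R b)]

lemma balFun_monotone {V : Type*} [Fintype V] {k : ℕ} (R : V → Fin k) :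
    Monotone (balFun R) := by
  intro i j hij
  unfold balFun
  apply sub_le_sub
  · exact Nat.cast_le.mpr (Finset.card_le_card (Finset.monotone_filter_right _
      (fun b _ hb => lt_of_lt_of_le hb hij)))
  · exact Nat.cast_le.mpr (Finset.card_le_card (Finset.monotone_filter_right _
      (fun b _ hb => lt_of_le_of_lt hij hb)))

lemma opScore_eq {V : Type*} [Fintype V] {k : ℕ} (w : V → V → ℝ) (Γ : V → ℝ)
    (hΓ : ∀ x y : V, x ≠ y → w x y = Γ x - Γ y) (R : V → Fin k) :
    opScore w R = ∑ a : V, Γ a * balFun R (R a) := by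
  have step1 : opScore w R = ∑ a : V, ∑ b : V, (if R b < R a then Γ a - Γ b else 0) := by
    unfold opScore
    refine Finset.sum_congr rfl fun a _ => Finset.sum_congr rfl fun b _ => ?_
    split_ifs with h
    · exact hΓ a b (fun hab => by subst hab; exact lt_irrefl _ h)
    · rfl
  rw [step1]
  have step2 : ∀ (a b : V), (if R b < R a then Γ a - Γ b else 0)
      = (if R b < R a then Γ a else 0) - (if R b < R a then Γ b else 0) := by
    intro a b; split_ifs <;> simp
  simp_rw [step2, Finset.sum_sub_distrib]
  have h1 : ∀ a : V, ∑ b : V, (if R b < R a then Γ a else 0)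
      = ((Finset.univ.filter fun b => R b < R a).card : ℝ) * Γ a := by
    intro a
    rw [← Finset.sum_filter, Finset.sum_const, nsmul_eq_mul]
  have h2 : (∑ a : V, ∑ b : V, (if R b < R a then Γ b else 0))
      = ∑ a : V, ((Finset.univ.filter fun b => R a < R b).card : ℝ) * Γ a := by
    rw [Finset.sum_comm]
    refine Finset.sum_congr rfl fun a _ => ?_
    rw [← Finset.sum_filter, Finset.sum_const, nsmul_eq_mul]
  simp_rw [h1]
  rw [h2, ← Finset.sum_sub_distrib]
  refine Finset.sum_congr rfl fun a _ => ?_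
  unfold balFun
  ring

/-- For a difference-generated (purely acyclic) edge-weight assignment, for
every `k` there is a monotone ordered `k`-partition — one placing vertices of
lower `Γ`-value in weakly lower pieces — achieving the maximum score among all
ordered `k`-partitions. -/
theorem exists_monotone_maximal_ordered_partition
    {V : Type*} [Fintype V] (w : V → V → ℝ) (Γ : V → ℝ)
    (hanti : ∀ x y : V, w x y = -w y x)
    (hΓ : ∀ x y : V, x ≠ y → w x y = Γ x - Γ y)
    (k : ℕ) (hk : 0 < k) :
    ∃ P : V → Fin k,
      (∀ x y : V, Γ x < Γ y → P x ≤ P y) ∧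
      ∀ Q : V → Fin k, opScore w Q ≤ opScore w P := by
  classical
  -- A maximizer exists by finiteness
  have hne : Nonempty (V → Fin k) := ⟨fun _ => ⟨0, hk⟩⟩
  obtain ⟨Q, hQ⟩ := Finite.exists_max (opScore w : (V → Fin k) → ℝ)
  -- Enumerate V in nondecreasing order of Γ
  set m := Fintype.card V with hm
  let e1 : Fin m ≃ V := (Fintype.equivFin V).symm
  let σΓ : Equiv.Perm (Fin m) := Tuple.sort (Γ ∘ e1)
  let e : Fin m ≃ V := σΓ.trans e1
  have heΓ : Monotone (Γ ∘ e) := Tuple.monotone_sort (Γ ∘ e1)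
  -- Sort the values of Q along e
  let f : Fin m → Fin k := Q ∘ e
  let τ : Equiv.Perm (Fin m) := Tuple.sort f
  have hds : Monotone (f ∘ τ) := Tuple.monotone_sort f
  let P : V → Fin k := fun v => f (τ (e.symm v))
  have hPe : ∀ i : Fin m, P (e i) = f (τ i) := fun i => by simp [P]
  -- P is Q composed with a bijection
  have hPψ : P = fun v => Q ((e.symm.trans (τ.trans e)) v) := by
    funext v; simp [P, f, Function.comp]
  have hbal : balFun P = balFun Q := by
    rw [hPψ]; exact balFun_comp_equiv Q (e.symm.trans (τ.trans e))
  refine ⟨P, ?_, ?_⟩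
  · -- monotonicity of P w.r.t. Γ
    intro x y hxy
    have hidx : e.symm x < e.symm y := by
      by_contra h
      push_neg at h
      have := heΓ h
      simp only [Function.comp_apply, Equiv.apply_symm_apply] at this
      exact absurd this (not_le.mpr hxy)
    have : f (τ (e.symm x)) ≤ f (τ (e.symm y)) := hds (le_of_lt hidx)
    exact this
  · -- maximality
    intro R
    refine le_trans (hQ R) ?_
    rw [opScore_eq w Γ hΓ Q, opScore_eq w Γ hΓ P]
    -- reindex both sums along e
    rw [← Equiv.sum_comp e (fun a => Γ a * balFun Q (Q a)),
        ← Equiv.sum_comp e (fun a => Γ a * balFun P (P a))]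
    have hg : Monotone (fun i => balFun Q (f (τ i))) :=
      (balFun_monotone Q).comp hds
    have hmono : Monovary (fun i => Γ (e i)) (fun i => balFun Q (f (τ i))) := by
      intro i j hij
      have hle : i ≤ j := by
        by_contra h
        push_neg at h
        exact absurd (hg (le_of_lt h)) (not_le.mpr hij)
      exact heΓ hle
    have key := hmono.sum_smul_comp_perm_le_sum_smul (σ := τ.symm)
    simp only [smul_eq_mul] at key
    calc ∑ i : Fin m, Γ (e i) * balFun Q (Q (e i))
        = ∑ i : Fin m, Γ (e i) * balFun Q (f (τ (τ.symm i))) := by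
          refine Finset.sum_congr rfl fun i _ => ?_
          simp [f]
      _ ≤ ∑ i : Fin m, Γ (e i) * balFun Q (f (τ i)) := key
      _ = ∑ i : Fin m, Γ (e i) * balFun P (P (e i)) := by
          refine Finset.sum_congr rfl fun i _ => ?_
          rw [hbal, hPe]
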